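/- Lopsidedness criterion: if x ∈ ℝ^n is such that there exists β ∈ A with |c_β| e^{⟨β,x⟩} > ∑_{α∈A, α≠β} |c_α| e^{⟨α,x⟩}, then x does not belong to the amoeba 𝒜_p. -/

import Mathlib

open MeasureTheory Real

noncomputable section

/-- Evaluation of the Laurent polynomial with support `A` and coefficients `c`
at the point `z`. -/
def lEval {n : ℕ} (A : Finset (Fin n → ℤ)) (c : (Fin n → ℤ) → ℂ)
    (z : Fin n → ℂ) : ℂ :=
  ∑ α ∈ A, c α * ∏ i, z i ^ α i

/-- The coordinatewise logarithm of moduli. -/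
def logMap {n : ℕ} (z : Fin n → ℂ) : Fin n → ℝ :=
  fun i => Real.log ‖z i‖

/-- The amoeba of the Laurent polynomial with support `A` and coefficients `c`. -/
def amoeba {n : ℕ} (A : Finset (Fin n → ℤ)) (c : (Fin n → ℤ) → ℂ) :
    Set (Fin n → ℝ) :=
  logMap '' {z | (∀ i, z i ≠ 0) ∧ lEval A c z = 0}

/-- The point of the complex torus with radial coordinates `e^u` and angles `θ`. -/
def tPt {n : ℕ} (u θ : Fin n → ℝ) : Fin n → ℂ :=
  fun i => Complex.exp (u i + θ i * Complex.I)

/-- The cube `[0, 2π]^n`. -/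
def cube (n : ℕ) : Set (Fin n → ℝ) := Set.univ.pi fun _ => Set.Icc 0 (2 * π)

/-- The order vector of a point `u` in the amoeba complement. -/
def order {n : ℕ} (A : Finset (Fin n → ℤ)) (c : (Fin n → ℤ) → ℂ)
    (u : Fin n → ℝ) : Fin n → ℂ := fun j =>
  (((2 * π) ^ n : ℝ) : ℂ)⁻¹ *
    ∫ θ in cube n,
      (∑ α ∈ A, c α * (α j : ℂ) * ∏ i, tPt u θ i ^ α i) / lEval A c (tPt u θ)

/-- The Ronkin function. -/
def ronkin {n : ℕ} (A : Finset (Fin n → ℤ)) (c : (Fin n → ℤ) → ℂ)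
    (x : Fin n → ℝ) : ℝ :=
  ((2 * π) ^ n)⁻¹ * ∫ θ in cube n, Real.log ‖lEval A c (tPt x θ)‖

/-- The Newton polytope of the support `A`. -/
def newton {n : ℕ} (A : Finset (Fin n → ℤ)) : Set (Fin n → ℝ) :=
  convexHull ℝ ((fun (α : Fin n → ℤ) (i : Fin n) => (α i : ℝ)) '' (A : Set (Fin n → ℤ)))

end

/-- Lopsidedness criterion: if at `x ∈ ℝⁿ` some monomial of `p` dominates the
sum of the absolute values of all the others, then `x` is not in the amoeba. -/
theorem stmt_12 {n : ℕ} (A : Finset (Fin n → ℤ)) (c : (Fin n → ℤ) → ℂ)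
    (hA : A.Nonempty) (hc : ∀ α ∈ A, c α ≠ 0)
    (x : Fin n → ℝ) (β : Fin n → ℤ) (hβ : β ∈ A)
    (h : ∑ α ∈ A.erase β, ‖c α‖ * Real.exp (∑ i, (α i : ℝ) * x i) <
         ‖c β‖ * Real.exp (∑ i, (β i : ℝ) * x i)) :
    x ∉ amoeba A c := by
  rintro ⟨z, ⟨hz0, hzeval⟩, rfl⟩
  have key : ∀ α : Fin n → ℤ,
      ‖c α * ∏ i, z i ^ α i‖
        = ‖c α‖ * Real.exp (∑ i, (α i : ℝ) * logMap z i) := by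
    intro α
    rw [norm_mul, norm_prod, Real.exp_sum]
    congr 1
    refine Finset.prod_congr rfl fun i _ => ?_
    have habs : ‖z i‖ = Real.exp (logMap z i) :=
      (Real.exp_log (norm_pos_iff.mpr (hz0 i))).symm
    rw [norm_zpow, habs, ← Real.rpow_intCast, ← Real.exp_mul, mul_comm]
  have hsplit : c β * ∏ i, z i ^ β i = -∑ α ∈ A.erase β, c α * ∏ i, z i ^ α i := by
    have h0 := hzeval
    rw [lEval, ← Finset.add_sum_erase A _ hβ] at h0
    linear_combination h0
  have hb : ‖c β‖ * Real.exp (∑ i, (β i : ℝ) * logMap z i)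
      ≤ ∑ α ∈ A.erase β, ‖c α‖ * Real.exp (∑ i, (α i : ℝ) * logMap z i) := by
    calc ‖c β‖ * Real.exp (∑ i, (β i : ℝ) * logMap z i)
        = ‖c β * ∏ i, z i ^ β i‖ := (key β).symm
      _ = ‖∑ α ∈ A.erase β, c α * ∏ i, z i ^ α i‖ := by
          rw [hsplit, norm_neg]
      _ ≤ ∑ α ∈ A.erase β, ‖c α * ∏ i, z i ^ α i‖ :=
          norm_sum_le _ _
      _ = _ := Finset.sum_congr rfl fun α _ => key α
  exact absurd hb (not_le.mpr h)
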